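/- Let 0 < ε < 1 be a real number and let G be a graph on n ≥ 2 vertices. Set p = 2⌈n/ε⌉ and q = ⌈(1+ε)(p−1)⌉ − (n+p). Let G' be the graph obtained from a copy of G by adding: p new pairwise adjacent vertices u_1,…,u_p; an edge v u_1 for every vertex v of G; and q new vertices w_1,…,w_q with the edges u_1 w_1, w_{i−1} w_i for 2 ≤ i ≤ q, and w_q u_2. Then q ≥ 1, G' is connected, the degeneracy of G' equals p−1, G' has exactly ⌈(1+ε)(p−1)⌉ vertices, and G' contains a path with at least (1+ε)·dg(G') vertices if and only if G has a Hamiltonian path. -/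

import Mathlib

noncomputable def SimpleGraph.degeneracy {V : Type*} [Fintype V] (G : SimpleGraph V) : ℕ :=
  sSup {d : ℕ | ∃ s : Set V, s.Nonempty ∧ ∀ v ∈ s, d ≤ (G.neighborSet v ∩ s).ncard}

def pathHardnessGraph {V : Type*} (G : SimpleGraph V) (p q : ℕ) :
    SimpleGraph (V ⊕ (Fin p ⊕ Fin q)) :=
  SimpleGraph.fromRel (fun x y =>
    match x, y with
    | Sum.inl a, Sum.inl b => G.Adj a b
    | Sum.inl _, Sum.inr (Sum.inl i) => i.val = 0
    | Sum.inr (Sum.inl _), Sum.inr (Sum.inl _) => True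
    | Sum.inr (Sum.inl i), Sum.inr (Sum.inr j) =>
        (i.val = 0 ∧ j.val = 0) ∨ (i.val = 1 ∧ j.val = q - 1)
    | Sum.inr (Sum.inr i), Sum.inr (Sum.inr j) => j.val = i.val + 1
    | _, _ => False)


namespace PathHardness
open SimpleGraph

variable {V : Type*}

lemma exists_walk_of_chain (G : SimpleGraph V) (a : V) (l : List V)
    (h : List.Chain G.Adj a l) : ∃ b, ∃ w : G.Walk a b, w.support = a :: l := by
  induction l generalizing a with
  | nil => exact ⟨a, .nil, rfl⟩
  | cons c l ih =>
    change List.IsChain G.Adj (a :: c :: l) at h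
    rw [List.isChain_cons_cons] at h
    obtain ⟨b, w, hw⟩ := ih c h.2
    exact ⟨b, .cons h.1 w, by simp [hw]⟩

variable {G : SimpleGraph V} {p q : ℕ}

lemma adj_inl_inl {a b : V} :
    (pathHardnessGraph G p q).Adj (Sum.inl a) (Sum.inl b) ↔ G.Adj a b := by
  simp only [pathHardnessGraph, fromRel_adj]
  constructor
  · rintro ⟨h, h1 | h1⟩ <;> [exact h1; exact h1.symm]
  · intro h; exact ⟨by simp [h.ne], Or.inl h⟩

lemma adj_inl_u {a : V} {i : Fin p} :
    (pathHardnessGraph G p q).Adj (Sum.inl a) (Sum.inr (Sum.inl i)) ↔ i.val = 0 := by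
  simp [pathHardnessGraph, fromRel_adj]

lemma adj_u_u {i j : Fin p} :
    (pathHardnessGraph G p q).Adj (Sum.inr (Sum.inl i)) (Sum.inr (Sum.inl j)) ↔ i ≠ j := by
  simp [pathHardnessGraph, fromRel_adj, Sum.inr.injEq, Sum.inl.injEq]

lemma adj_u_w {i : Fin p} {j : Fin q} :
    (pathHardnessGraph G p q).Adj (Sum.inr (Sum.inl i)) (Sum.inr (Sum.inr j)) ↔
      (i.val = 0 ∧ j.val = 0) ∨ (i.val = 1 ∧ j.val = q - 1) := by
  simp [pathHardnessGraph, fromRel_adj]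

lemma adj_w_w {i j : Fin q} :
    (pathHardnessGraph G p q).Adj (Sum.inr (Sum.inr i)) (Sum.inr (Sum.inr j)) ↔
      (j.val = i.val + 1 ∨ i.val = j.val + 1) := by
  simp only [pathHardnessGraph, fromRel_adj, ne_eq, Sum.inr.injEq]
  constructor
  · rintro ⟨h, h1 | h1⟩ <;> omega
  · intro h
    refine ⟨fun he => ?_, ?_⟩
    · subst he; omega
    · omega

lemma not_adj_inl_w {a : V} {j : Fin q} :
    ¬ (pathHardnessGraph G p q).Adj (Sum.inl a) (Sum.inr (Sum.inr j)) := by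
  simp [pathHardnessGraph, fromRel_adj]

lemma side_of_adj (hp0 : 0 < p) {x y : V ⊕ (Fin p ⊕ Fin q)}
    (h : (pathHardnessGraph G p q).Adj x y)
    (hx : x ≠ Sum.inr (Sum.inl ⟨0, hp0⟩)) (hy : y ≠ Sum.inr (Sum.inl ⟨0, hp0⟩)) :
    (x.isLeft ↔ y.isLeft) := by
  rcases x with a | i | i <;> rcases y with b | j | j <;> simp only [Sum.isLeft]
  · have : j = ⟨0, hp0⟩ := Fin.ext (adj_inl_u.mp h)
    exact (hy (by rw [this])).elim
  · exact (not_adj_inl_w h).elim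
  · have : i = ⟨0, hp0⟩ := Fin.ext (adj_inl_u.mp h.symm)
    exact (hx (by rw [this])).elim
  · exact (not_adj_inl_w h.symm).elim

lemma homog (hp0 : 0 < p) (l : List (V ⊕ (Fin p ⊕ Fin q)))
    (hc : List.Chain' (pathHardnessGraph G p q).Adj l)
    (hu : Sum.inr (Sum.inl (⟨0, hp0⟩ : Fin p)) ∉ l) :
    (∀ x ∈ l, x.isLeft) ∨ (∀ x ∈ l, ¬ x.isLeft = true) := by
  induction l with
  | nil => exact Or.inl (by simp)
  | cons x xs ih =>
    have hx : x ≠ Sum.inr (Sum.inl ⟨0, hp0⟩) := fun h => hu (by simp [h])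
    have hxs := ih hc.tail (fun h => hu (List.mem_cons_of_mem _ h))
    match xs, hxs with
    | [], _ =>
      rcases hb : x.isLeft with _|_
      · exact Or.inr (by intro z hz; simp only [List.mem_singleton] at hz; subst hz; rw [hb]; simp)
      · exact Or.inl (by intro z hz; simp only [List.mem_singleton] at hz; subst hz; rw [hb])
    | y :: ys, hxs =>
      have hadj : (pathHardnessGraph G p q).Adj x y := (List.isChain_cons_cons.mp hc).1
      have hy : y ≠ Sum.inr (Sum.inl ⟨0, hp0⟩) := fun h => hu (by simp [h])
      have hs := side_of_adj hp0 hadj hx hy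
      rcases hxs with h1 | h1
      · exact Or.inl (by
          intro z hz
          rcases List.mem_cons.mp hz with rfl | hz
          · exact hs.mpr (h1 y (by simp))
          · exact h1 z hz)
      · exact Or.inr (by
          intro z hz
          rcases List.mem_cons.mp hz with rfl | hz
          · intro hzl
            exact h1 y (by simp) (hs.mp hzl)
          · exact h1 z hz)

lemma exists_map_inl (l : List (V ⊕ (Fin p ⊕ Fin q))) (h : ∀ x ∈ l, x.isLeft) :
    ∃ m : List V, l = m.map Sum.inl := by
  induction l with
  | nil => exact ⟨[], rfl⟩
  | cons x xs ih =>
    obtain ⟨m, hm⟩ := ih (fun z hz => h z (List.mem_cons_of_mem _ hz))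
    obtain ⟨a, rfl⟩ := Sum.isLeft_iff.mp (h x (by simp))
    exact ⟨a :: m, by simp [hm]⟩

lemma extract_ham [Nonempty V] (l : List (V ⊕ (Fin p ⊕ Fin q)))
    (hc : List.Chain' (pathHardnessGraph G p q).Adj l)
    (hleft : ∀ x ∈ l, x.isLeft) (hnd : l.Nodup)
    (hall : ∀ v : V, Sum.inl v ∈ l) :
    ∃ u v, ∃ w : G.Walk u v, w.IsPath ∧ ∀ x : V, x ∈ w.support := by
  obtain ⟨m, rfl⟩ := exists_map_inl l hleft
  have hmc : List.Chain' G.Adj m := by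
    change List.IsChain _ _ at hc
    rw [List.isChain_map] at hc
    exact List.IsChain.imp (fun a b hab => adj_inl_inl.mp hab) hc
  obtain ⟨a, m', rfl⟩ : ∃ a m', m = a :: m' := by
    cases m with
    | nil => exact absurd (hall (Classical.arbitrary V)) (by simp)
    | cons a m' => exact ⟨a, m', rfl⟩
  obtain ⟨b, w, hw⟩ := exists_walk_of_chain G a m' hmc
  refine ⟨a, b, w, ?_, ?_⟩
  · rw [SimpleGraph.Walk.isPath_def, hw]
    exact (hnd.of_map _)
  · intro x
    rw [hw]
    have := hall x
    rwa [List.mem_map_of_injective Sum.inl_injective] at this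

lemma reverse_dir [Nonempty V] (hp2 : 2 ≤ p)
    {s t : V ⊕ (Fin p ⊕ Fin q)} (w : (pathHardnessGraph G p q).Walk s t)
    (hw : w.IsPath) (hallmem : ∀ x, x ∈ w.support) :
    ∃ u v, ∃ wk : G.Walk u v, wk.IsPath ∧ ∀ x : V, x ∈ wk.support := by
  have hp0 : 0 < p := by omega
  classical
  set u1 : V ⊕ (Fin p ⊕ Fin q) := Sum.inr (Sum.inl ⟨0, hp0⟩) with hu1def
  have hmem : u1 ∈ w.support := hallmem u1
  set tk := w.takeUntil u1 hmem with htkdef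
  set dr := w.dropUntil u1 hmem with hdrdef
  have hspec : tk.append dr = w := w.take_spec hmem
  have hsup : w.support = tk.support ++ dr.support.tail := by
    rw [← hspec, SimpleGraph.Walk.support_append]
  have htkP : tk.IsPath := hw.takeUntil hmem
  have hdrP : dr.IsPath := hw.dropUntil hmem
  set l1 := tk.support.dropLast with hl1def
  set l2 := dr.support.tail with hl2def
  have htk : tk.support = l1 ++ [u1] := by
    have h0 := List.dropLast_append_getLast (l := tk.support) (by simp)
    rw [SimpleGraph.Walk.getLast_support] at h0
    exact h0.symm
  have hdr : dr.support = u1 :: l2 := dr.support_eq_cons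
  have hnd1' : (l1 ++ [u1]).Nodup := htk ▸ htkP.support_nodup
  have hnd2' : (u1 :: l2).Nodup := hdr ▸ hdrP.support_nodup
  have hu1l1 : u1 ∉ l1 := by
    intro h
    exact (List.nodup_append'.mp hnd1').2.2 h (by simp)
  have hu1l2 : u1 ∉ l2 := (List.nodup_cons.mp hnd2').1
  have hc1 : List.Chain' (pathHardnessGraph G p q).Adj l1 :=
    (tk.isChain_adj_support).prefix (List.dropLast_prefix _)
  have hc2 : List.Chain' (pathHardnessGraph G p q).Adj l2 :=
    (dr.isChain_adj_support).tail
  have h1 := homog hp0 l1 hc1 hu1l1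
  have h2 := homog hp0 l2 hc2 hu1l2
  have hmem' : ∀ x, x ≠ u1 → (x ∈ l1 ∨ x ∈ l2) := by
    intro x hx
    have hh := hallmem x
    rw [hsup, htk] at hh
    simp only [List.mem_append, List.mem_singleton] at hh
    tauto
  have hnd1 : l1.Nodup := (List.nodup_append.mp hnd1').1
  have hnd2 : l2.Nodup := (List.nodup_cons.mp hnd2').2
  have hinl : ∀ v : V, (Sum.inl v : V ⊕ (Fin p ⊕ Fin q)) ∈ l1 ∨ Sum.inl v ∈ l2 :=
    fun v => hmem' (Sum.inl v) (by simp [hu1def])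
  have hu2 : (Sum.inr (Sum.inl ⟨1, by omega⟩) : V ⊕ (Fin p ⊕ Fin q)) ∈ l1 ∨
      (Sum.inr (Sum.inl ⟨1, by omega⟩) : V ⊕ (Fin p ⊕ Fin q)) ∈ l2 := by
    refine hmem' _ ?_
    simp only [hu1def, ne_eq, Sum.inr.injEq, Sum.inl.injEq]
    intro h
    have := congrArg Fin.val h
    simp at this
  rcases h1 with h1l | h1r <;> rcases h2 with h2l | h2r
  · rcases hu2 with h | h
    · exact absurd (h1l _ h) (by simp)
    · exact absurd (h2l _ h) (by simp)
  · refine extract_ham l1 hc1 h1l hnd1 ?_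
    intro v
    rcases hinl v with h | h
    · exact h
    · exact absurd (by simp) (h2r _ h)
  · refine extract_ham l2 hc2 h2l hnd2 ?_
    intro v
    rcases hinl v with h | h
    · exact absurd (by simp) (h1r _ h)
    · exact h
  · obtain ⟨v⟩ := ‹Nonempty V›
    rcases hinl v with h | h
    · exact absurd (by simp) (h1r _ h)
    · exact absurd (by simp) (h2r _ h)

lemma exists_wChain (G : SimpleGraph V) (p : ℕ) {q : ℕ} (hq0 : 0 < q) :
    ∀ (m : ℕ) (j : Fin q), j.val + m + 1 = q →
    ∃ w : (pathHardnessGraph G p q).Walk (Sum.inr (Sum.inr j))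
        (Sum.inr (Sum.inr ⟨q - 1, by omega⟩)),
      w.support.length = m + 1 ∧ w.support.Nodup ∧
      ∀ x ∈ w.support, ∃ k : Fin q, x = Sum.inr (Sum.inr k) ∧ j.val ≤ k.val := by
  intro m
  induction m with
  | zero =>
    intro j hj
    obtain rfl : j = ⟨q - 1, Nat.sub_lt hq0 Nat.one_pos⟩ := Fin.ext (by simp only [Fin.val_mk]; omega)
    exact ⟨.nil, by simp, by simp, by simp; omega⟩
  | succ m ih =>
    intro j hj
    obtain ⟨w, hlen, hnd, hmem⟩ := ih ⟨j.val + 1, by omega⟩ (by simp only [Fin.val_mk]; omega)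
    have hadj : (pathHardnessGraph G p q).Adj (Sum.inr (Sum.inr j))
        (Sum.inr (Sum.inr ⟨j.val + 1, by omega⟩)) := adj_w_w.mpr (Or.inl rfl)
    refine ⟨.cons hadj w, by simp [hlen], ?_, ?_⟩
    · rw [SimpleGraph.Walk.support_cons, List.nodup_cons]
      refine ⟨fun h => ?_, hnd⟩
      obtain ⟨k, hk, hk2⟩ := hmem _ h
      simp only [Sum.inr.injEq] at hk
      have := congrArg Fin.val hk
      simp only [Fin.val_mk] at this hk2 ⊢ <;> omega
    · intro x hx
      rw [SimpleGraph.Walk.support_cons, List.mem_cons] at hx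
      rcases hx with rfl | hx
      · exact ⟨j, rfl, le_refl _⟩
      · obtain ⟨k, hk, hk2⟩ := hmem x hx
        exact ⟨k, hk, by simp only [Fin.val_mk] at hk2; omega⟩

lemma exists_uChain (G : SimpleGraph V) (q : ℕ) {p : ℕ} :
    ∀ (m : ℕ) (i : Fin p), i.val + m + 1 = p →
    ∃ t, ∃ w : (pathHardnessGraph G p q).Walk (Sum.inr (Sum.inl i)) t,
      w.support.length = m + 1 ∧ w.support.Nodup ∧
      ∀ x ∈ w.support, ∃ k : Fin p, x = Sum.inr (Sum.inl k) ∧ i.val ≤ k.val := by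
  intro m
  induction m with
  | zero =>
    intro i hi
    exact ⟨_, .nil, by simp, by simp, by simp⟩
  | succ m ih =>
    intro i hi
    obtain ⟨t, w, hlen, hnd, hmem⟩ := ih ⟨i.val + 1, by omega⟩ (by simp only [Fin.val_mk]; omega)
    have hadj : (pathHardnessGraph G p q).Adj (Sum.inr (Sum.inl i))
        (Sum.inr (Sum.inl ⟨i.val + 1, by omega⟩)) :=
      adj_u_u.mpr (by intro h; have := congrArg Fin.val h; simp at this)
    refine ⟨t, .cons hadj w, by simp [hlen], ?_, ?_⟩
    · rw [SimpleGraph.Walk.support_cons, List.nodup_cons]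
      refine ⟨fun h => ?_, hnd⟩
      obtain ⟨k, hk, hk2⟩ := hmem _ h
      simp only [Sum.inr.injEq, Sum.inl.injEq] at hk
      have := congrArg Fin.val hk
      simp only [Fin.val_mk] at this hk2 ⊢ <;> omega
    · intro x hx
      rw [SimpleGraph.Walk.support_cons, List.mem_cons] at hx
      rcases hx with rfl | hx
      · exact ⟨i, rfl, le_refl _⟩
      · obtain ⟨k, hk, hk2⟩ := hmem x hx
        exact ⟨k, hk, by simp only [Fin.val_mk] at hk2; omega⟩

lemma forward_dir (hp2 : 2 ≤ p) (hq1 : 1 ≤ q)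
    {a b : V} (w0 : G.Walk a b) (h0 : w0.IsPath) :
    ∃ s t, ∃ w : (pathHardnessGraph G p q).Walk s t, w.IsPath ∧
      w.support.length = w0.support.length + p + q := by
  have hp0 : 0 < p := by omega
  have hq0 : 0 < q := by omega
  obtain ⟨wch, wlen, wnd, wmem⟩ :=
    exists_wChain G p hq0 (q - 1) ⟨0, hq0⟩ (by simp only [Fin.val_mk]; omega)
  have hp1 : (1 : ℕ) < p := by omega
  obtain ⟨t, uch, ulen, und, umem⟩ :=
    exists_uChain G q (p - 2) ⟨1, hp1⟩ (by simp only [Fin.val_mk]; omega)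
  have hw2u : (pathHardnessGraph G p q).Adj
      (Sum.inr (Sum.inr (⟨q - 1, by omega⟩ : Fin q))) (Sum.inr (Sum.inl (⟨1, by omega⟩ : Fin p))) :=
    (adj_u_w.mpr (Or.inr ⟨rfl, rfl⟩)).symm
  set inner := wch.append (SimpleGraph.Walk.cons hw2u uch) with hinner
  have hinner_sup : inner.support = wch.support ++ uch.support := by
    rw [hinner, SimpleGraph.Walk.support_append, SimpleGraph.Walk.support_cons]
    simp
  have hu1w : (pathHardnessGraph G p q).Adj (Sum.inr (Sum.inl (⟨0, hp0⟩ : Fin p)))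
      (Sum.inr (Sum.inr (⟨0, hq0⟩ : Fin q))) := adj_u_w.mpr (Or.inl ⟨rfl, rfl⟩)
  have hbu1 : (pathHardnessGraph G p q).Adj (Sum.inl b) (Sum.inr (Sum.inl (⟨0, hp0⟩ : Fin p))) :=
    adj_inl_u.mpr rfl
  set homInl : G →g pathHardnessGraph G p q := ⟨Sum.inl, fun h => adj_inl_inl.mpr h⟩ with hhom
  set W1 := w0.map homInl with hW1
  have hW1sup : W1.support = w0.support.map Sum.inl := SimpleGraph.Walk.support_map _ _
  set W := W1.append (.cons hbu1 (.cons hu1w inner)) with hW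
  have hWsup : W.support = w0.support.map Sum.inl ++
      (Sum.inr (Sum.inl (⟨0, hp0⟩ : Fin p)) :: (wch.support ++ uch.support)) := by
    rw [hW, SimpleGraph.Walk.support_append, hW1sup]
    congr 1
    rw [SimpleGraph.Walk.support_cons, SimpleGraph.Walk.support_cons, hinner_sup]
    simp
  refine ⟨_, _, W, ?_, ?_⟩
  · rw [SimpleGraph.Walk.isPath_def, hWsup]
    rw [List.nodup_append']
    refine ⟨h0.support_nodup.map Sum.inl_injective, ?_, ?_⟩
    · rw [List.nodup_cons, List.nodup_append']
      refine ⟨?_, wnd, und, ?_⟩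
      · intro h
        rcases List.mem_append.mp h with h | h
        · obtain ⟨k, hk, -⟩ := wmem _ h
          simp at hk
        · obtain ⟨k, hk, hk2⟩ := umem _ h
          simp only [Sum.inr.injEq, Sum.inl.injEq] at hk
          have h0k := congrArg Fin.val hk
          simp only [Fin.val_mk] at h0k hk2
          omega
      · intro x hx hy
        obtain ⟨k, hk, -⟩ := wmem _ hx
        obtain ⟨k', hk', -⟩ := umem _ hy
        rw [hk] at hk'
        simp at hk'
    · intro x hx hy
      rcases List.mem_map.mp hx with ⟨v, -, rfl⟩
      rcases List.mem_cons.mp hy with h | h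
      · simp at h
      · rcases List.mem_append.mp h with h | h
        · obtain ⟨k, hk, -⟩ := wmem _ h; simp at hk
        · obtain ⟨k, hk, -⟩ := umem _ h; simp at hk
  · rw [hWsup]
    simp only [List.length_append, List.length_map, List.length_cons, wlen, ulen]
    omega

lemma connected_phg (hp0 : 0 < p) [Nonempty V] : (pathHardnessGraph G p q).Connected := by
  rw [SimpleGraph.connected_iff]
  refine ⟨?_, ⟨Sum.inr (Sum.inl ⟨0, hp0⟩)⟩⟩
  have key : ∀ x, (pathHardnessGraph G p q).Reachable x (Sum.inr (Sum.inl ⟨0, hp0⟩)) := by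
    have hw : ∀ (m : ℕ) (j : Fin q), j.val = m →
        (pathHardnessGraph G p q).Reachable (Sum.inr (Sum.inr j)) (Sum.inr (Sum.inl ⟨0, hp0⟩)) := by
      intro m
      induction m with
      | zero =>
        intro j hj
        exact (SimpleGraph.Adj.reachable
          ((adj_u_w (i := ⟨0, hp0⟩) (j := j)).mpr (Or.inl ⟨rfl, hj⟩))).symm
      | succ m ih =>
        intro j hj
        have hm : m < q := by have := j.isLt; omega
        refine (SimpleGraph.Adj.reachable ?_).trans (ih ⟨m, hm⟩ rfl)
        exact adj_w_w.mpr (Or.inr (by simp only [Fin.val_mk]; omega))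
    intro x
    rcases x with a | i | j
    · exact SimpleGraph.Adj.reachable (adj_inl_u.mpr rfl)
    · by_cases h : i = ⟨0, hp0⟩
      · rw [h]
      · exact SimpleGraph.Adj.reachable (adj_u_u.mpr h)
    · exact hw j.val j rfl
  intro x y
  exact (key x).trans (key y).symm

lemma degeneracy_phg [Fintype V] (hpn : Fintype.card V + 2 ≤ p) (hp5 : 5 ≤ p) :
    (pathHardnessGraph G p q).degeneracy = p - 1 := by
  have hp0 : 0 < p := by omega
  have hp1 : 1 < p := by omega
  classical
  set uv : Fin p → V ⊕ (Fin p ⊕ Fin q) := fun i => Sum.inr (Sum.inl i) with huv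
  have huvinj : Function.Injective uv := by
    intro i j h
    simpa [huv, Sum.inr.injEq, Sum.inl.injEq] using h
  set S := {d : ℕ | ∃ s : Set (V ⊕ (Fin p ⊕ Fin q)), s.Nonempty ∧
      ∀ v ∈ s, d ≤ ((pathHardnessGraph G p q).neighborSet v ∩ s).ncard} with hS
  have hrange : (Set.range uv).ncard = p := by
    rw [← Set.image_univ, Set.ncard_image_of_injective _ huvinj, Set.ncard_univ,
      Nat.card_eq_fintype_card, Fintype.card_fin]
  have hbound : ∀ d ∈ S, d ≤ p - 1 := by
    rintro d ⟨s, ⟨x0, hx0⟩, hd⟩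
    by_cases hV : ∃ a : V, Sum.inl a ∈ s
    · obtain ⟨a, ha⟩ := hV
      have hsub : (pathHardnessGraph G p q).neighborSet (Sum.inl a) ⊆
          insert (uv ⟨0, hp0⟩) (Set.range Sum.inl) := by
        intro y hy
        rcases y with b | i | j
        · exact Set.mem_insert_of_mem _ ⟨b, rfl⟩
        · have : i = ⟨0, hp0⟩ := Fin.ext ((adj_inl_u (G := G)).mp hy)
          rw [this]; exact Set.mem_insert _ _
        · exact absurd hy (not_adj_inl_w (G := G))
      calc d ≤ ((pathHardnessGraph G p q).neighborSet (Sum.inl a) ∩ s).ncard := hd _ ha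
        _ ≤ ((pathHardnessGraph G p q).neighborSet (Sum.inl a)).ncard :=
            Set.ncard_le_ncard Set.inter_subset_left (Set.toFinite _)
        _ ≤ (insert (uv ⟨0, hp0⟩) (Set.range Sum.inl)).ncard :=
            Set.ncard_le_ncard hsub (Set.toFinite _)
        _ ≤ (Set.range (Sum.inl : V → V ⊕ (Fin p ⊕ Fin q))).ncard + 1 :=
            Set.ncard_insert_le _ _
        _ = Fintype.card V + 1 := by
            rw [← Set.image_univ, Set.ncard_image_of_injective _ Sum.inl_injective,
              Set.ncard_univ, Nat.card_eq_fintype_card]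
        _ ≤ p - 1 := by omega
    · by_cases hW : ∃ j : Fin q, Sum.inr (Sum.inr j) ∈ s
      · obtain ⟨j, hj⟩ := hW
        set A : V ⊕ (Fin p ⊕ Fin q) :=
          if h : j.val + 1 < q then Sum.inr (Sum.inr ⟨j.val + 1, h⟩) else uv ⟨0, hp0⟩ with hA
        set B : V ⊕ (Fin p ⊕ Fin q) :=
          if h : 0 < j.val then Sum.inr (Sum.inr ⟨j.val - 1, by omega⟩) else uv ⟨0, hp0⟩ with hB
        set C : Set (V ⊕ (Fin p ⊕ Fin q)) :=
          insert (uv ⟨0, hp0⟩) (insert (uv ⟨1, hp1⟩) (insert A {B})) with hC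
        have hsub : (pathHardnessGraph G p q).neighborSet (Sum.inr (Sum.inr j)) ⊆ C := by
          intro y hy
          rcases y with b | i | k
          · exact absurd (SimpleGraph.adj_symm _ hy) (not_adj_inl_w (G := G))
          · rcases (adj_u_w (G := G)).mp (SimpleGraph.adj_symm _ hy) with ⟨h1, h2⟩ | ⟨h1, h2⟩
            · have : i = ⟨0, hp0⟩ := Fin.ext h1
              rw [hC, this]; exact Set.mem_insert _ _
            · have : i = ⟨1, hp1⟩ := Fin.ext h1
              rw [hC, this]; exact Set.mem_insert_of_mem _ (Set.mem_insert _ _)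
          · rcases (adj_w_w (G := G) (p := p)).mp hy with h1 | h1
            · have hlt : j.val + 1 < q := by have := k.isLt; omega
              have hAk : A = Sum.inr (Sum.inr k) := by
                rw [hA, dif_pos hlt]
                congr 2
                exact Fin.ext (by simp only [Fin.val_mk]; omega)
              rw [hC, ← hAk]
              exact Set.mem_insert_of_mem _ (Set.mem_insert_of_mem _ (Set.mem_insert _ _))
            · have hpos : 0 < j.val := by omega
              have hBk : B = Sum.inr (Sum.inr k) := by
                rw [hB, dif_pos hpos]
                congr 2
                exact Fin.ext (by simp only [Fin.val_mk]; omega)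
              rw [hC, ← hBk]
              exact Set.mem_insert_of_mem _
                (Set.mem_insert_of_mem _ (Set.mem_insert_of_mem _ rfl))
        have hC4 : C.ncard ≤ 4 := by
          have c1 := Set.ncard_insert_le (uv ⟨0, hp0⟩) (insert (uv ⟨1, hp1⟩) (insert A {B}))
          have c2 := Set.ncard_insert_le (uv ⟨1, hp1⟩) (insert A {B})
          have c3 := Set.ncard_insert_le A ({B} : Set (V ⊕ (Fin p ⊕ Fin q)))
          have c4 := Set.ncard_singleton B
          rw [hC]
          omega
        calc d ≤ ((pathHardnessGraph G p q).neighborSet (Sum.inr (Sum.inr j)) ∩ s).ncard :=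
              hd _ hj
          _ ≤ ((pathHardnessGraph G p q).neighborSet (Sum.inr (Sum.inr j))).ncard :=
              Set.ncard_le_ncard Set.inter_subset_left (Set.toFinite _)
          _ ≤ C.ncard := Set.ncard_le_ncard hsub (Set.toFinite _)
          _ ≤ 4 := hC4
          _ ≤ p - 1 := by omega
      · have hx0' : ∃ i : Fin p, x0 = uv i := by
          rcases x0 with a | i | j
          · exact absurd ⟨a, hx0⟩ hV
          · exact ⟨i, rfl⟩
          · exact absurd ⟨j, hx0⟩ hW
        obtain ⟨i, rfl⟩ := hx0'
        have hsSub : s ⊆ Set.range uv := by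
          intro y hy
          rcases y with a | i' | j
          · exact absurd ⟨a, hy⟩ hV
          · exact ⟨i', rfl⟩
          · exact absurd ⟨j, hy⟩ hW
        have hcard : s.ncard ≤ p :=
          le_trans (Set.ncard_le_ncard hsSub (Set.toFinite _)) (le_of_eq hrange)
        have hdiff := Set.ncard_diff_singleton_of_mem hx0
        calc d ≤ ((pathHardnessGraph G p q).neighborSet (uv i) ∩ s).ncard := hd _ hx0
          _ ≤ (s \ {uv i}).ncard := by
              refine Set.ncard_le_ncard (fun y hy => ?_) (Set.toFinite _)
              refine ⟨hy.2, fun h => (pathHardnessGraph G p q).irrefl (v := uv i) ?_⟩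
              have h1 := hy.1
              rw [Set.mem_singleton_iff.mp h] at h1
              exact h1
          _ = s.ncard - 1 := hdiff
          _ ≤ p - 1 := by omega
  have hmem : p - 1 ∈ S := by
    refine ⟨Set.range uv, ⟨uv ⟨0, hp0⟩, Set.mem_range_self _⟩, ?_⟩
    rintro v ⟨i, rfl⟩
    have hsub : Set.range uv \ {uv i} ⊆
        (pathHardnessGraph G p q).neighborSet (uv i) ∩ Set.range uv := by
      rintro y ⟨⟨k, rfl⟩, hne⟩
      refine ⟨(adj_u_u (G := G) (q := q)).mpr (fun h => hne ?_), Set.mem_range_self _⟩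
      rw [Set.mem_singleton_iff, h]
    have hdiff := Set.ncard_diff_singleton_of_mem (Set.mem_range_self (f := uv) i)
    calc p - 1 = (Set.range uv).ncard - 1 := by rw [hrange]
      _ = (Set.range uv \ {uv i}).ncard := hdiff.symm
      _ ≤ _ := Set.ncard_le_ncard hsub (Set.toFinite _)
  refine le_antisymm (csSup_le ⟨p - 1, hmem⟩ hbound) (le_csSup ⟨p - 1, hbound⟩ hmem)

end PathHardness
open PathHardness

/-- Let `0 < ε < 1`, let `G` be a graph on `n ≥ 2` vertices, let `p = 2⌈n/ε⌉` and
`q = ⌈(1+ε)(p-1)⌉ - (n+p)`, and let `G'` be the graph of the reduction. Then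
`q ≥ 1`, `G'` is connected, `dg(G') = p - 1`, `G'` has exactly `⌈(1+ε)(p-1)⌉`
vertices, and `G'` has a path with at least `(1+ε)·dg(G')` vertices iff `G` has a
Hamiltonian path. -/
theorem path_above_degeneracy_tight {V : Type*} [Fintype V] (G : SimpleGraph V)
    (ε : ℝ) (hε0 : 0 < ε) (hε1 : ε < 1) (hn : 2 ≤ Fintype.card V)
    (p q : ℕ)
    (hp : (p : ℤ) = 2 * ⌈(Fintype.card V : ℝ) / ε⌉)
    (hq : (q : ℤ) = ⌈(1 + ε) * ((p : ℝ) - 1)⌉ - (Fintype.card V + p)) :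
    1 ≤ q ∧
    (pathHardnessGraph G p q).Connected ∧
    (pathHardnessGraph G p q).degeneracy = p - 1 ∧
    ((Fintype.card (V ⊕ (Fin p ⊕ Fin q)) : ℤ) = ⌈(1 + ε) * ((p : ℝ) - 1)⌉) ∧
    ((∃ (u v : V ⊕ (Fin p ⊕ Fin q)) (w : (pathHardnessGraph G p q).Walk u v),
        w.IsPath ∧ (1 + ε) * ((pathHardnessGraph G p q).degeneracy : ℝ) ≤ w.support.length) ↔
     (∃ (u v : V) (w : G.Walk u v), w.IsPath ∧ ∀ x : V, x ∈ w.support)) := by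
  classical
  haveI hVne : Nonempty V := Fintype.card_pos_iff.mp (by omega)
  have hnR : (2 : ℝ) ≤ (Fintype.card V : ℝ) := by exact_mod_cast hn
  have hceil1 : (Fintype.card V : ℤ) < ⌈(Fintype.card V : ℝ) / ε⌉ := by
    rw [Int.lt_ceil]
    push_cast
    rw [lt_div_iff₀ hε0]
    nlinarith
  have hp2n : 2 * (Fintype.card V : ℤ) + 2 ≤ (p : ℤ) := by linarith [hp, hceil1]
  have hp6 : 6 ≤ p := by
    have h6 : (6 : ℤ) ≤ (p : ℤ) := by
      have := hn
      have hn' : (2 : ℤ) ≤ (Fintype.card V : ℤ) := by exact_mod_cast hn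
      linarith
    exact_mod_cast h6
  have hpn : Fintype.card V + 2 ≤ p := by
    have : (Fintype.card V : ℤ) + 2 ≤ (p : ℤ) := by
      have hn' : (0 : ℤ) ≤ (Fintype.card V : ℤ) := by positivity
      linarith
    exact_mod_cast this
  have hpR : (p : ℝ) = 2 * ((⌈(Fintype.card V : ℝ) / ε⌉ : ℤ) : ℝ) := by exact_mod_cast hp
  have hceil := Int.le_ceil ((Fintype.card V : ℝ) / ε)
  have hdiv : (Fintype.card V : ℝ) / ε * ε = Fintype.card V :=
    div_mul_cancel₀ _ (ne_of_gt hε0)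
  have hεp : 2 * (Fintype.card V : ℝ) ≤ ε * p := by
    rw [hpR]
    calc 2 * (Fintype.card V : ℝ) = 2 * ((Fintype.card V : ℝ) / ε * ε) := by rw [hdiv]
      _ ≤ 2 * (((⌈(Fintype.card V : ℝ) / ε⌉ : ℤ) : ℝ) * ε) := by nlinarith [hceil, hε0]
      _ = ε * (2 * ((⌈(Fintype.card V : ℝ) / ε⌉ : ℤ) : ℝ)) := by ring
  have hpR6 : (6 : ℝ) ≤ (p : ℝ) := by exact_mod_cast hp6
  have hlt : ((Fintype.card V : ℤ) + p) < ⌈(1 + ε) * ((p : ℝ) - 1)⌉ := by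
    rw [Int.lt_ceil]
    push_cast
    nlinarith [hεp, hnR, hε1.le]
  have hq1 : 1 ≤ q := by
    have : (1 : ℤ) ≤ (q : ℤ) := by linarith [hq, hlt]
    exact_mod_cast this
  have hceilq : (⌈(1 + ε) * ((p : ℝ) - 1)⌉ : ℤ) = (Fintype.card V : ℤ) + p + q := by
    rw [hq]; ring
  have hdeg := degeneracy_phg (G := G) (p := p) (q := q) hpn (by omega)
  have hconn := connected_phg (G := G) (p := p) (q := q) (by omega)
  have hcardsum : Fintype.card (V ⊕ (Fin p ⊕ Fin q)) = Fintype.card V + p + q := by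
    simp [Fintype.card_sum]
    omega
  refine ⟨hq1, hconn, hdeg, ?_, ?_⟩
  · rw [hcardsum, hceilq]; push_cast; ring
  · rw [hdeg]
    have hcast : ((p - 1 : ℕ) : ℝ) = (p : ℝ) - 1 := by
      rw [Nat.cast_sub (by omega)]; norm_num
    rw [hcast]
    constructor
    · rintro ⟨u, v, w, hw, hlen⟩
      have hle : w.support.length ≤ Fintype.card V + p + q := by
        have := hw.support_nodup.length_le_card
        rwa [hcardsum] at this
      have hge : ((Fintype.card V : ℤ) + p + q) ≤ (w.support.length : ℤ) := by
        rw [← hceilq, Int.ceil_le]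
        push_cast
        exact hlen
      have heq : w.support.length = Fintype.card (V ⊕ (Fin p ⊕ Fin q)) := by
        rw [hcardsum]
        have h1 : (Fintype.card V + p + q : ℤ) ≤ (w.support.length : ℤ) := by
          push_cast; push_cast at hge; linarith
        have h2 : (w.support.length : ℤ) ≤ (Fintype.card V + p + q : ℤ) := by
          exact_mod_cast hle
        omega
      have hall : ∀ x, x ∈ w.support := by
        intro x
        have h1 : w.support.toFinset.card = Fintype.card (V ⊕ (Fin p ⊕ Fin q)) := by
          rw [List.toFinset_card_of_nodup hw.support_nodup, heq]
        rw [← List.mem_toFinset, Finset.eq_univ_of_card _ h1]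
        exact Finset.mem_univ x
      exact reverse_dir (G := G) (p := p) (q := q) (by omega) w hw hall
    · rintro ⟨u, v, w0, h0, hall0⟩
      have ht : w0.support.toFinset = Finset.univ :=
        Finset.eq_univ_iff_forall.mpr (fun x => List.mem_toFinset.mpr (hall0 x))
      have hlen0 : w0.support.length = Fintype.card V := by
        rw [← List.toFinset_card_of_nodup h0.support_nodup, ht, Finset.card_univ]
      obtain ⟨s, t, W, hW, hWlen⟩ := forward_dir (G := G) (p := p) (q := q) (by omega) hq1 w0 h0
      refine ⟨s, t, W, hW, ?_⟩
      rw [hWlen, hlen0]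
      have hle := Int.le_ceil ((1 + ε) * ((p : ℝ) - 1))
      rw [hceilq] at hle
      push_cast at hle ⊢
      linarith
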